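/- arXiv:1502.05774 — 2 statements merged into one kernel-verified Lean document; each statement's English description precedes it below -/
import Mathlib

section
/- Fix K > 0 and Δ ∈ (0, K] with Δ²/K² ≤ c_max, and let π be the random price with point mass of probability Δ/(K·√c_max) at c_max and density Δ/(2K·x^{3/2}) on the interval (max{c, Δ²/K²}, c_max), conditioned on exceeding a cost c ≥ 0. Then the expected payment E[π · 1{π ≥ c}] = (Δ/K)·(2√c_max − √(max{c, Δ²/K²})). -/
open MeasureTheory

theorem expected_payment
    (K Δ cmax c : ℝ) (hK : 0 < K) (hΔ : 0 < Δ) (hΔK : Δ ≤ K)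
    (hcmax : Δ ^ 2 / K ^ 2 ≤ cmax) (hc : 0 ≤ c) (hccmax : c ≤ cmax)
    (ν : Measure ℝ)
    (hν : ν = (ENNReal.ofReal (Δ / (K * Real.sqrt cmax))) • Measure.dirac cmax +
      (volume : Measure ℝ).withDensity
        (Set.indicator (Set.Ioo (max c (Δ ^ 2 / K ^ 2)) cmax)
          (fun x => ENNReal.ofReal (Δ / (2 * K * x ^ ((3:ℝ)/2)))))) :
    ∫ x in Set.Ici c, x ∂ν =
      (Δ / K) * (2 * Real.sqrt cmax - Real.sqrt (max c (Δ ^ 2 / K ^ 2))) := by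
  have hK2 : (0:ℝ) < Δ ^ 2 / K ^ 2 := by positivity
  set M := max c (Δ ^ 2 / K ^ 2) with hMdef
  have hM0 : 0 < M := lt_max_of_lt_right hK2
  have hMc : M ≤ cmax := max_le hccmax hcmax
  have hcm0 : (0:ℝ) < cmax := lt_of_lt_of_le hK2 hcmax
  have hsub : Set.Ioo M cmax ⊆ Set.Ici c := fun x hx =>
    le_of_lt (lt_of_le_of_lt (le_max_left _ _) hx.1)
  set f : ℝ → NNReal := fun x => (Δ / (2 * K * x ^ ((3:ℝ)/2))).toNNReal with hfdef
  have hf : Measurable f := by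
    apply Measurable.real_toNNReal
    fun_prop
  have hcoe : (fun x => ENNReal.ofReal (Δ / (2 * K * x ^ ((3:ℝ)/2)))) =
      (fun x => (f x : ENNReal)) := rfl
  have hres : ν.restrict (Set.Ici c) =
      (ENNReal.ofReal (Δ / (K * Real.sqrt cmax))) • Measure.dirac cmax +
      (volume.restrict (Set.Ioo M cmax)).withDensity (fun x => (f x : ENNReal)) := by
    rw [hν, Measure.restrict_add, Measure.restrict_smul, hcoe,
        withDensity_indicator measurableSet_Ioo,
        restrict_withDensity measurableSet_Ici,
        Measure.restrict_restrict measurableSet_Ici,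
        Set.inter_eq_right.mpr hsub, restrict_dirac' measurableSet_Ici,
        if_pos (by exact hccmax : cmax ∈ Set.Ici c)]
  -- integrabilities
  have hI1 : Integrable (fun x : ℝ => x)
      ((ENNReal.ofReal (Δ / (K * Real.sqrt cmax))) • Measure.dirac cmax) := by
    refine Integrable.smul_measure ?_ ENNReal.ofReal_ne_top
    refine ⟨measurable_id.aestronglyMeasurable, ?_⟩
    simp [HasFiniteIntegral, lintegral_dirac]
  have hgint : IntegrableOn (fun x : ℝ => Δ / (2 * K) * x ^ (-(1:ℝ)/2))
      (Set.Ioo M cmax) volume := by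
    have := (intervalIntegral.intervalIntegrable_rpow'
      (a := M) (b := cmax) (r := -(1:ℝ)/2) (by norm_num)).1
    exact (this.mono_set Set.Ioo_subset_Ioc_self).const_mul _
  have heq : ∀ x ∈ Set.Ioo M cmax,
      (f x • x : ℝ) = Δ / (2 * K) * x ^ (-(1:ℝ)/2) := by
    intro x hx
    have hx0 : 0 < x := lt_trans hM0 hx.1
    have h32 : (0:ℝ) < x ^ ((3:ℝ)/2) := Real.rpow_pos_of_pos hx0 _
    have hfx : (f x : ℝ) = Δ / (2 * K * x ^ ((3:ℝ)/2)) :=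
      Real.coe_toNNReal _ (by positivity)
    rw [NNReal.smul_def, smul_eq_mul, hfx]
    have hsplit : x ^ ((3:ℝ)/2) = x * x ^ ((1:ℝ)/2) := by
      rw [← Real.rpow_one_add' hx0.le (by norm_num)]
      norm_num
    have hneg : x ^ (-(1:ℝ)/2) = (x ^ ((1:ℝ)/2))⁻¹ := by
      rw [show (-(1:ℝ)/2) = -((1:ℝ)/2) by ring, Real.rpow_neg hx0.le]
    have h12 : (0:ℝ) < x ^ ((1:ℝ)/2) := Real.rpow_pos_of_pos hx0 _
    rw [hsplit, hneg]
    field_simp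
  have hI2 : Integrable (fun x : ℝ => x)
      ((volume.restrict (Set.Ioo M cmax)).withDensity (fun x => (f x : ENNReal))) := by
    rw [integrable_withDensity_iff_integrable_smul hf]
    refine hgint.congr ?_
    refine (ae_restrict_iff' measurableSet_Ioo).2 (ae_of_all _ fun x hx => ?_)
    exact (heq x hx).symm
  rw [hres, integral_add_measure hI1 hI2]
  have hpart1 : ∫ x : ℝ, x ∂((ENNReal.ofReal (Δ / (K * Real.sqrt cmax))) • Measure.dirac cmax)
      = Δ / (K * Real.sqrt cmax) * cmax := by
    rw [integral_smul_measure, integral_dirac, smul_eq_mul,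
        ENNReal.toReal_ofReal (by positivity)]
  have hpart2 : ∫ x : ℝ, x
      ∂((volume.restrict (Set.Ioo M cmax)).withDensity (fun x => (f x : ENNReal)))
      = Δ / K * (Real.sqrt cmax - Real.sqrt M) := by
    rw [integral_withDensity_eq_integral_smul hf]
    rw [setIntegral_congr_fun measurableSet_Ioo heq]
    rw [← integral_Ioc_eq_integral_Ioo, ← intervalIntegral.integral_of_le hMc,
        intervalIntegral.integral_const_mul,
        integral_rpow (Or.inl (by norm_num : (-1:ℝ) < -(1:ℝ)/2))]
    have : (-(1:ℝ)/2 + 1) = 1/2 := by norm_num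
    rw [this, ← Real.sqrt_eq_rpow, ← Real.sqrt_eq_rpow]
    field_simp
  rw [hpart1, hpart2]
  have hs : Real.sqrt cmax * Real.sqrt cmax = cmax := Real.mul_self_sqrt hcm0.le
  have hs0 : Real.sqrt cmax ≠ 0 := ne_of_gt (Real.sqrt_pos.2 hcm0)
  field_simp
  linear_combination (-1) * hs
end

section
/- Let H be a real inner product space, C ⊆ H convex, and for each t ∈ {1,...,T} let Φ_t : H → ℝ be (1/η)-strongly convex with Φ_t(h) = Φ_{t-1}(h) + f_t(h), where f_t is convex. Let h_t minimize Φ_{t-1} and h_{t+1} minimize Φ_t over C. Then ‖h_t − h_{t+1}‖² ≤ 2η·(f_t(h_t) − f_t(h_{t+1})). -/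
/-- If `g` is `m`-strongly convex on `s` and `x` minimizes `g` on `s`, then
`g x + m/2 * ‖y - x‖² ≤ g y` for all `y ∈ s`. -/
lemma strong_convex_min_growth
    {E : Type*} [NormedAddCommGroup E] [NormedSpace ℝ E]
    {s : Set E} {m : ℝ} {g : E → ℝ} (hg : StrongConvexOn s m g)
    {x y : E} (hx : x ∈ s) (hy : y ∈ s) (hmin : IsMinOn g s x) :
    g x + m / 2 * ‖y - x‖ ^ 2 ≤ g y := by
  have key : ∀ b : ℝ, b ∈ Set.Ioo (0:ℝ) 1 →
      g x + m / 2 * b * ‖y - x‖ ^ 2 ≤ g y := by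
    intro b hb
    have ha0 : (0:ℝ) ≤ 1 - b := by linarith [hb.2]
    have hb0 : (0:ℝ) ≤ b := hb.1.le
    have hab : (1 - b) + b = 1 := by ring
    have hconv := hg.2 hy hx ha0 hb0 hab
    have hmem : (1 - b) • y + b • x ∈ s := hg.1 hy hx ha0 hb0 hab
    have hlow : g x ≤ g ((1 - b) • y + b • x) := hmin hmem
    have h2 : g x ≤ (1 - b) * g y + b * g x - (1 - b) * b * (m / 2 * ‖y - x‖ ^ 2) := by
      calc g x ≤ g ((1 - b) • y + b • x) := hlow
        _ ≤ (1 - b) • g y + b • g x - (1 - b) * b * (m / 2 * ‖y - x‖ ^ 2) := hconv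
        _ = (1 - b) * g y + b * g x - (1 - b) * b * (m / 2 * ‖y - x‖ ^ 2) := by
            simp [smul_eq_mul]
    have hpos : 0 < 1 - b := by linarith [hb.2]
    nlinarith [h2]
  -- take the limit b → 1⁻
  have htend : Filter.Tendsto (fun b : ℝ => g x + m / 2 * b * ‖y - x‖ ^ 2)
      (nhdsWithin 1 (Set.Ioo (0:ℝ) 1)) (nhds (g x + m / 2 * 1 * ‖y - x‖ ^ 2)) := by
    apply Filter.Tendsto.mono_left _ nhdsWithin_le_nhds
    exact (tendsto_const_nhds.add (((continuous_const.mul continuous_id).mul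
      continuous_const).tendsto 1))
  have hne : (nhdsWithin (1:ℝ) (Set.Ioo (0:ℝ) 1)).NeBot := by
    apply IsLUB.nhdsWithin_neBot
    · exact isLUB_Ioo one_pos
    · exact Set.nonempty_Ioo.2 one_pos
  have := le_of_tendsto htend (Filter.eventually_of_mem self_mem_nhdsWithin
    (fun b hb => key b hb))
  simpa using this

theorem ftrl_stability
    {H : Type*} [NormedAddCommGroup H] [InnerProductSpace ℝ H]
    (C : Set H) (hC : Convex ℝ C) (η : ℝ) (hη : 0 < η)
    (Φprev Φcur f : H → ℝ)
    (hf : ConvexOn ℝ C f)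
    (hsum : ∀ h, Φcur h = Φprev h + f h)
    (hΦprev : StrongConvexOn C (1 / η) Φprev)
    (hΦcur : StrongConvexOn C (1 / η) Φcur)
    (ht ht1 : H) (hmemt : ht ∈ C) (hmemt1 : ht1 ∈ C)
    (hmint : IsMinOn Φprev C ht) (hmint1 : IsMinOn Φcur C ht1) :
    ‖ht - ht1‖ ^ 2 ≤ 2 * η * (f ht - f ht1) := by
  have h1 : Φcur ht1 + (1 / η) / 2 * ‖ht - ht1‖ ^ 2 ≤ Φcur ht :=
    strong_convex_min_growth hΦcur hmemt1 hmemt hmint1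
  have h2 : Φprev ht ≤ Φprev ht1 := hmint hmemt1
  have e1 := hsum ht
  have e2 := hsum ht1
  have hη' : (0:ℝ) < 1 / η := by positivity
  have : (1 / η) / 2 * ‖ht - ht1‖ ^ 2 ≤ f ht - f ht1 := by linarith
  have hfin := mul_le_mul_of_nonneg_left this (le_of_lt (by positivity : (0:ℝ) < 2 * η))
  calc ‖ht - ht1‖ ^ 2 = 2 * η * ((1 / η) / 2 * ‖ht - ht1‖ ^ 2) := by
        field_simp
    _ ≤ 2 * η * (f ht - f ht1) := hfin
end
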